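/- arXiv:2201.03820 — 3 statements merged into one kernel-verified Lean document; each statement's English description precedes it below -/
import Mathlib

section
/- In the graph H constructed from a bipartite graph G = (R ∪ B, E) by adding, for each blue vertex u_i ∈ B, a set C_i of b²+3 pendant-like vertices adjacent only to u_i (where b = |B| and b ≥ 2), adding a set D of b²+3 vertices adjacent only to a new vertex ⋆, making ⋆ adjacent to all red vertices, and adding a new vertex † adjacent only to ⋆: the minimum vertex cover number of H is exactly b + 1. -/
/-- `S` is a vertex cover of `G`: every edge has at least one endpoint in `S`. -/
def IsVertexCover {V : Type*} (G : SimpleGraph V) (S : Set V) : Prop :=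
  ∀ ⦃u v : V⦄, G.Adj u v → u ∈ S ∨ v ∈ S

/-- The minimum vertex cover number of `G`. -/
noncomputable def mvc {V : Type*} (G : SimpleGraph V) : ℕ :=
  sInf {n | ∃ S : Set V, S.Finite ∧ IsVertexCover G S ∧ S.ncard = n}

/-- The vertices of the graph `H` of the reduction: red vertices (from `R`),
blue vertices (from `B`), for each blue vertex `n` dependent vertices,
`n` dependent vertices of type `⋆`, the universal vertex `⋆` and the
backup vertex `†`. -/
inductive RVtx (R B : Type) (n : ℕ) : Type
  | red : R → RVtx R B n
  | blue : B → RVtx R B n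
  | dep : B → Fin n → RVtx R B n
  | depStar : Fin n → RVtx R B n
  | star : RVtx R B n
  | dagger : RVtx R B n

/-- The base adjacency relation of the graph `H` of the reduction, where
`E r u` means that red vertex `r` and blue vertex `u` are adjacent in `G`. -/
def hRel (R B : Type) (n : ℕ) (E : R → B → Prop) :
    RVtx R B n → RVtx R B n → Prop
  | .red r, .blue u => E r u
  | .blue u, .dep u' _ => u = u'
  | .star, .depStar _ => True
  | .red _, .star => True
  | .star, .dagger => True
  | _, _ => False

/-- The graph `H` of the reduction, built from the bipartite graph `G` with red
vertices `R`, blue vertices `B` and edge relation `E`, with `b² + 3` dependent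
vertices per blue vertex and of type `⋆`. -/
def hGraph (R B : Type) (b : ℕ) (E : R → B → Prop) : SimpleGraph (RVtx R B (b ^ 2 + 3)) :=
  SimpleGraph.fromRel (hRel R B (b ^ 2 + 3) E)

/-- In the graph `H` constructed from a connected bipartite graph
`G = (R ∪ B, E)` with `b = |B| ≥ 2` and every blue vertex having a red neighbor,
the minimum vertex cover number of `H` is exactly `b + 1`. -/
theorem mvc_hGraph (R B : Type) [Fintype R] [Fintype B] (E : R → B → Prop)
    (b : ℕ) (hb : Fintype.card B = b) (hb2 : 2 ≤ b)
    (hredneighbor : ∀ u : B, ∃ r : R, E r u)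
    (hconn : (SimpleGraph.fromRel (fun x y : R ⊕ B =>
        ∃ r u, x = Sum.inl r ∧ y = Sum.inr u ∧ E r u)).Connected) :
    mvc (hGraph R B b E) = b + 1 := by
  classical
  have hadj_bd : ∀ (u : B) (i : Fin (b^2+3)),
      (hGraph R B b E).Adj (.blue u) (.dep u i) := by
    intro u i
    simp [hGraph, hRel]
  have hadj_sd : ∀ (i : Fin (b^2+3)), (hGraph R B b E).Adj .star (.depStar i) := by
    intro i; simp [hGraph, hRel]
  have hblue_inj : Function.Injective (RVtx.blue : B → RVtx R B (b^2+3)) := by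
    intro a c h; injection h
  have hcard_range : ∀ {α : Type} [Fintype α] (f : α → RVtx R B (b^2+3)),
      Function.Injective f → (Set.range f).ncard = Fintype.card α := by
    intro α _ f hf
    rw [← Set.image_univ, Set.ncard_image_of_injective _ hf, Set.ncard_univ,
      Nat.card_eq_fintype_card]
  have hbig : b + 1 ≤ b ^ 2 + 3 := by
    have : b ≤ b ^ 2 := Nat.le_self_pow (by norm_num) b
    omega
  have hmem : b + 1 ∈ {n | ∃ S : Set (RVtx R B (b^2+3)), S.Finite ∧
      IsVertexCover (hGraph R B b E) S ∧ S.ncard = n} := by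
    refine ⟨insert .star (Set.range RVtx.blue), (Set.finite_range _).insert _, ?_, ?_⟩
    · intro x y hxy
      rw [hGraph, SimpleGraph.fromRel_adj] at hxy
      obtain ⟨hne, h⟩ := hxy
      cases x <;> cases y <;> simp [hRel] at h <;> simp
    · rw [Set.ncard_insert_of_notMem (by simp) (Set.finite_range _),
        hcard_range _ hblue_inj, hb]
  have hlb : ∀ n ∈ {n | ∃ S : Set (RVtx R B (b^2+3)), S.Finite ∧
      IsVertexCover (hGraph R B b E) S ∧ S.ncard = n}, b + 1 ≤ n := by
    rintro n ⟨S, hfin, hcov, rfl⟩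
    by_cases hall : ∀ u : B, RVtx.blue u ∈ S
    · by_cases hstar : (RVtx.star : RVtx R B (b^2+3)) ∈ S
      · have hsub : insert RVtx.star (Set.range RVtx.blue) ⊆ S := by
          rintro x (rfl | ⟨u, rfl⟩)
          · exact hstar
          · exact hall u
        have := Set.ncard_le_ncard hsub hfin
        rwa [Set.ncard_insert_of_notMem (by simp) (Set.finite_range _),
          hcard_range _ hblue_inj, hb] at this
      · have hsub : Set.range (RVtx.depStar : Fin (b^2+3) → RVtx R B (b^2+3)) ⊆ S := by
          rintro x ⟨i, rfl⟩
          rcases hcov (hadj_sd i) with h | h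
          · exact absurd h hstar
          · exact h
        have := Set.ncard_le_ncard hsub hfin
        rw [hcard_range _ (fun a c h => by injection h), Fintype.card_fin] at this
        omega
    · push_neg at hall
      obtain ⟨u, hu⟩ := hall
      have hsub : Set.range (RVtx.dep u : Fin (b^2+3) → RVtx R B (b^2+3)) ⊆ S := by
        rintro x ⟨i, rfl⟩
        rcases hcov (hadj_bd u i) with h | h
        · exact absurd h hu
        · exact h
      have := Set.ncard_le_ncard hsub hfin
      rw [hcard_range _ (fun a c h => by injection h), Fintype.card_fin] at this
      omega
  exact le_antisymm (Nat.sInf_le hmem) (le_csInf ⟨_, hmem⟩ hlb)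
end

section
/- In the graph H of the reduction (as constructed from a bipartite graph G with blue vertices B of size b ≥ 2), any vertex cover of H of size at most b + k + 2, where k < b, must contain all b blue vertices and the universal vertex ⋆. -/
/-- In the graph `H` of the reduction (constructed from a connected bipartite
graph `G` with blue vertices `B` of size `b ≥ 2`, every blue vertex having a red
neighbor), any vertex cover of `H` of size at most `b + k + 2`, where `k < b`,
must contain all `b` blue vertices and the universal vertex `⋆`. -/
theorem vertexCover_hGraph_contains_blue_and_star (R B : Type) [Fintype R] [Fintype B]
    (E : R → B → Prop)
    (b : ℕ) (hb : Fintype.card B = b) (hb2 : 2 ≤ b)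
    (hredneighbor : ∀ u : B, ∃ r : R, E r u)
    (hconn : (SimpleGraph.fromRel (fun x y : R ⊕ B =>
        ∃ r u, x = Sum.inl r ∧ y = Sum.inr u ∧ E r u)).Connected)
    (k : ℕ) (hk : k < b)
    (S : Set (RVtx R B (b ^ 2 + 3))) (hSfin : S.Finite)
    (hS : IsVertexCover (hGraph R B b E) S) (hScard : S.ncard ≤ b + k + 2) :
    (∀ u : B, RVtx.blue u ∈ S) ∧ RVtx.star ∈ S := by
  have hcard : b + k + 2 < b ^ 2 + 3 := by nlinarith
  have key : ∀ (f : Fin (b ^ 2 + 3) → RVtx R B (b ^ 2 + 3)), Function.Injective f →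
      (∀ i, f i ∈ S) → False := by
    intro f hf hmem
    have h1 : (Set.range f).ncard ≤ S.ncard :=
      Set.ncard_le_ncard (Set.range_subset_iff.2 hmem) hSfin
    have h2 : (Set.range f).ncard = b ^ 2 + 3 := by
      rw [← Nat.card_coe_set_eq, Nat.card_range_of_injective hf,
        Nat.card_eq_fintype_card, Fintype.card_fin]
    omega
  constructor
  · intro u
    by_contra hu
    apply key (fun i => RVtx.dep u i)
    · intro i j h
      injection h
    · intro i
      have hadj : (hGraph R B b E).Adj (RVtx.blue u) (RVtx.dep u i) := by
        refine ⟨by simp, Or.inl ?_⟩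
        show u = u
        rfl
      rcases hS hadj with h | h
      · exact absurd h hu
      · exact h
  · by_contra hu
    apply key (fun i => RVtx.depStar i)
    · intro i j h
      injection h
    · intro i
      have hadj : (hGraph R B b E).Adj RVtx.star (RVtx.depStar i) := by
        refine ⟨by simp, Or.inl trivial⟩
      rcases hS hadj with h | h
      · exact absurd h hu
      · exact h
end

section
/- Let G be a cobipartite graph with clique bipartition A, B, |A| = p ≥ 1, |B| = q, with no global vertex in A, and suppose exactly one vertex b₁ ∈ B is non-global. Then every vertex cover of G of size p + q − 2 is of the form (A \ {a}) ∪ (B \ {b₁}) for some a ∈ A. -/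
/-- A vertex is global if it is adjacent to every other vertex of `G`. -/
def IsGlobal {V : Type*} (G : SimpleGraph V) (v : V) : Prop :=
  ∀ w : V, w ≠ v → G.Adj v w

/-- Let `G` be a cobipartite graph with clique bipartition `A, B`, `|A| = p ≥ 1`,
`|B| = q`, with no global vertex in `A`, and suppose exactly one vertex `b₁ ∈ B`
is non-global. Then every vertex cover of `G` of size `p + q − 2` is of the form
`(A \ {a}) ∪ (B \ {b₁})` for some `a ∈ A`. -/
theorem vertexCover_form_of_unique_nonglobal {V : Type*} [Fintype V] (G : SimpleGraph V)
    (A B : Set V) (hdisj : Disjoint A B) (hunion : A ∪ B = Set.univ)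
    (hA : G.IsClique A) (hB : G.IsClique B)
    (p q : ℕ) (hp : A.ncard = p) (hq : B.ncard = q) (hp1 : 1 ≤ p)
    (hnoglobalA : ∀ a ∈ A, ¬ IsGlobal G a)
    (b₁ : V) (hb₁ : b₁ ∈ B) (hb₁ng : ¬ IsGlobal G b₁)
    (huniq : ∀ b ∈ B, ¬ IsGlobal G b → b = b₁)
    (S : Set V) (hS : IsVertexCover G S) (hcard : S.ncard = p + q - 2) :
    ∃ a ∈ A, S = (A \ {a}) ∪ (B \ {b₁}) := by
  classical
  have hAB : ∀ u, u ∈ A → u ∈ B → False := fun u ha hb =>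
    Set.disjoint_left.mp hdisj ha hb
  have huniv : Nat.card V = p + q := by
    rw [← Set.ncard_univ, ← hunion, Set.ncard_union_eq hdisj A.toFinite B.toFinite, hp, hq]
  have hq1 : 1 ≤ q := by
    rw [← hq]
    exact (Set.ncard_pos B.toFinite).mpr ⟨b₁, hb₁⟩
  have hcompl : Sᶜ.ncard = 2 := by
    have h := Set.ncard_add_ncard_compl S S.toFinite Sᶜ.toFinite
    rw [hcard, huniv] at h
    omega
  obtain ⟨x, y, hxy, hpair⟩ := Set.ncard_eq_two.mp hcompl
  have hxC : x ∈ Sᶜ := by rw [hpair]; exact Set.mem_insert x {y}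
  have hyC : y ∈ Sᶜ := by rw [hpair]; exact Set.mem_insert_of_mem x rfl
  have hnadj : ¬ G.Adj x y := fun h => (hS h).elim hxC hyC
  have key : ∀ a b, a ∈ A → b ∈ B → a ∉ S → b ∉ S → Sᶜ = {a, b} →
      ∃ a ∈ A, S = (A \ {a}) ∪ (B \ {b₁}) := by
    intro a b ha hb haS hbS hp2
    have hne : a ≠ b := fun h => hAB a ha (h ▸ hb)
    have hbng : ¬ IsGlobal G b := by
      intro hg
      have hadj : G.Adj a b := (hg a hne).symm
      exact (hS hadj).elim haS hbS
    have hbb : b = b₁ := huniq b hb hbng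
    subst hbb
    refine ⟨a, ha, ?_⟩
    ext v
    have hv : v ∈ A ∨ v ∈ B := by
      have : v ∈ A ∪ B := hunion ▸ Set.mem_univ v
      exact this
    have hvS : v ∈ S ↔ v ≠ a ∧ v ≠ b := by
      rw [← Set.notMem_compl_iff, hp2]
      simp [not_or]
    simp only [Set.mem_union, Set.mem_diff, Set.mem_singleton_iff, hvS]
    constructor
    · rintro ⟨h1, h2⟩
      rcases hv with h | h
      · exact Or.inl ⟨h, h1⟩
      · exact Or.inr ⟨h, h2⟩
    · rintro (⟨h, hne'⟩ | ⟨h, hne'⟩)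
      · exact ⟨hne', fun e => hAB v h (e ▸ hb)⟩
      · exact ⟨fun e => hAB v (e ▸ ha) h, hne'⟩
  have hx : x ∈ A ∨ x ∈ B := by
    have : x ∈ A ∪ B := hunion ▸ Set.mem_univ x
    exact this
  have hy : y ∈ A ∨ y ∈ B := by
    have : y ∈ A ∪ B := hunion ▸ Set.mem_univ y
    exact this
  rcases hx with hx | hx <;> rcases hy with hy | hy
  · exact absurd (hA hx hy hxy) hnadj
  · exact key x y hx hy hxC hyC hpair
  · exact key y x hy hx hyC hxC (by rw [hpair, Set.pair_comm])
  · exact absurd (hB hx hy hxy) hnadj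
end
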